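/- For n, m ≥ 2, the vector space of linear S_n × S_m-equivariant maps T : ℝ^{n×m} → ℝ^{n×m} (under the row-and-column permutation action) has dimension exactly 4. -/

import Mathlib

/-- The subspace of linear maps `ℝ^{n×m} → ℝ^{n×m}` equivariant to the
row-and-column permutation action of `S_n × S_m`. -/
noncomputable def equivariantMaps (n m : ℕ) :
    Submodule ℝ (Matrix (Fin n) (Fin m) ℝ →ₗ[ℝ] Matrix (Fin n) (Fin m) ℝ) where
  carrier := {T | ∀ (σ : Equiv.Perm (Fin n)) (τ : Equiv.Perm (Fin m))
      (X : Matrix (Fin n) (Fin m) ℝ),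
    T (fun j k => X (σ⁻¹ j) (τ⁻¹ k)) = fun j k => T X (σ⁻¹ j) (τ⁻¹ k)}
  add_mem' := by
    intro T S hT hS σ τ X
    have h1 := hT σ τ X
    have h2 := hS σ τ X
    funext j k
    exact congrArg₂ (· + ·) (congrFun (congrFun h1 j) k) (congrFun (congrFun h2 j) k)
  zero_mem' := by
    intro σ τ X
    rfl
  smul_mem' := by
    intro c T hT σ τ X
    have h1 := hT σ τ X
    funext j k
    exact congrArg (c • ·) (congrFun (congrFun h1 j) k)
  
open Matrix Finset
namespace EquivAux

variable {n m : ℕ}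

noncomputable def tId (n m : ℕ) : Matrix (Fin n) (Fin m) ℝ →ₗ[ℝ] Matrix (Fin n) (Fin m) ℝ :=
  LinearMap.id

noncomputable def tRow (n m : ℕ) : Matrix (Fin n) (Fin m) ℝ →ₗ[ℝ] Matrix (Fin n) (Fin m) ℝ where
  toFun X := fun j _ => ∑ k', X j k'
  map_add' X Y := by funext j k; simp [Finset.sum_add_distrib]; rfl
  map_smul' c X := by funext j k; change _ = c * _; simp [Finset.mul_sum]

noncomputable def tCol (n m : ℕ) : Matrix (Fin n) (Fin m) ℝ →ₗ[ℝ] Matrix (Fin n) (Fin m) ℝ where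
  toFun X := fun _ k => ∑ j', X j' k
  map_add' X Y := by funext j k; simp [Finset.sum_add_distrib]; rfl
  map_smul' c X := by funext j k; change _ = c * _; simp [Finset.mul_sum]

noncomputable def tAll (n m : ℕ) : Matrix (Fin n) (Fin m) ℝ →ₗ[ℝ] Matrix (Fin n) (Fin m) ℝ where
  toFun X := fun _ _ => ∑ j', ∑ k', X j' k'
  map_add' X Y := by funext j k; simp [Finset.sum_add_distrib]; rfl
  map_smul' c X := by funext j k; change _ = c * _; simp [Finset.mul_sum]

lemma tId_mem : tId n m ∈ equivariantMaps n m := by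
  intro σ τ X; rfl

lemma tRow_mem : tRow n m ∈ equivariantMaps n m := by
  intro σ τ X
  funext j k
  show ∑ k', X (σ⁻¹ j) (τ⁻¹ k') = ∑ k', X (σ⁻¹ j) k'
  exact Equiv.sum_comp τ⁻¹ (fun k' => X (σ⁻¹ j) k')

lemma tCol_mem : tCol n m ∈ equivariantMaps n m := by
  intro σ τ X
  funext j k
  show ∑ j', X (σ⁻¹ j') (τ⁻¹ k) = ∑ j', X j' (τ⁻¹ k)
  exact Equiv.sum_comp σ⁻¹ (fun j' => X j' (τ⁻¹ k))

lemma tAll_mem : tAll n m ∈ equivariantMaps n m := by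
  intro σ τ X
  funext j k
  show ∑ j', ∑ k', X (σ⁻¹ j') (τ⁻¹ k') = ∑ j', ∑ k', X j' k'
  rw [Equiv.sum_comp σ⁻¹ (fun j' => ∑ k', X j' (τ⁻¹ k'))]
  exact Finset.sum_congr rfl fun j' _ => Equiv.sum_comp τ⁻¹ (fun k' => X j' k')

lemma exists_perm {α : Type*} [DecidableEq α] (a b c d : α) (hab : a ≠ b) (hcd : c ≠ d) :
    ∃ σ : Equiv.Perm α, σ a = c ∧ σ b = d := by
  refine ⟨Equiv.swap (Equiv.swap a c b) d * Equiv.swap a c, ?_, ?_⟩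
  · have h1 : c ≠ Equiv.swap a c b := by
      intro h
      have h2 := congrArg (Equiv.swap a c) h
      rw [Equiv.swap_apply_self, Equiv.swap_apply_right] at h2
      exact hab h2
    rw [Equiv.Perm.mul_apply, Equiv.swap_apply_left,
      Equiv.swap_apply_of_ne_of_ne h1 hcd]
  · simp [Equiv.Perm.mul_apply, Equiv.swap_apply_left]

lemma exists_perm' (hn : 2 ≤ n) (j j' : Fin n) :
    ∃ σ : Equiv.Perm (Fin n), σ ⟨0, by omega⟩ = j' ∧
      σ⁻¹ j = if j = j' then (⟨0, by omega⟩ : Fin n) else ⟨1, by omega⟩ := by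
  by_cases h : j = j'
  · subst h
    refine ⟨Equiv.swap ⟨0, by omega⟩ j, Equiv.swap_apply_left _ _, ?_⟩
    simp [Equiv.swap_apply_right]
  · obtain ⟨σ, h1, h2⟩ := exists_perm (⟨0, by omega⟩ : Fin n) ⟨1, by omega⟩ j' j
      (by simp [Fin.ext_iff]) (Ne.symm h)
    refine ⟨σ, h1, ?_⟩
    rw [if_neg h, ← h2, ← Equiv.Perm.mul_apply, inv_mul_cancel, Equiv.Perm.one_apply]

/-- Key: equivariant maps on std basis matrices depend only on the orbit type. -/
lemma eval_stdBasis (hn : 2 ≤ n) (hm : 2 ≤ m)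
    (T : Matrix (Fin n) (Fin m) ℝ →ₗ[ℝ] Matrix (Fin n) (Fin m) ℝ)
    (hT : T ∈ equivariantMaps n m) (j j' : Fin n) (k k' : Fin m) :
    T (Matrix.single j' k' 1) j k =
      T (Matrix.single ⟨0, by omega⟩ ⟨0, by omega⟩ 1)
        (if j = j' then (⟨0, by omega⟩ : Fin n) else ⟨1, by omega⟩)
        (if k = k' then (⟨0, by omega⟩ : Fin m) else ⟨1, by omega⟩) := by
  obtain ⟨σ, hσ1, hσ2⟩ := exists_perm' hn j j'
  obtain ⟨τ, hτ1, hτ2⟩ := exists_perm' hm k k'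
  have key := hT σ τ (Matrix.single ⟨0, by omega⟩ ⟨0, by omega⟩ 1)
  have hfun : (fun a b => Matrix.single (⟨0, by omega⟩ : Fin n) (⟨0, by omega⟩ : Fin m)
      (1:ℝ) (σ⁻¹ a) (τ⁻¹ b)) = Matrix.single j' k' 1 := by
    funext a b
    simp only [Matrix.single, of_apply]
    congr 1
    have e1 : ((⟨0, by omega⟩ : Fin n) = σ⁻¹ a) ↔ (j' = a) := by
      rw [eq_comm, Equiv.Perm.inv_eq_iff_eq, ← hσ1]
      exact eq_comm
    have e2 : ((⟨0, by omega⟩ : Fin m) = τ⁻¹ b) ↔ (k' = b) := by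
      rw [eq_comm, Equiv.Perm.inv_eq_iff_eq, ← hτ1]
      exact eq_comm
    simp only [e1, e2]
  rw [hfun] at key
  rw [key]
  show T _ (σ⁻¹ j) (τ⁻¹ k) = _
  rw [hσ2, hτ2]

lemma reprT (hn : 2 ≤ n) (hm : 2 ≤ m)
    (T : Matrix (Fin n) (Fin m) ℝ →ₗ[ℝ] Matrix (Fin n) (Fin m) ℝ)
    (hT : T ∈ equivariantMaps n m) :
    ∃ c0 c1 c2 c3 : ℝ,
      T = c0 • tId n m + c1 • tRow n m + c2 • tCol n m + c3 • tAll n m := by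
  set e0n : Fin n := ⟨0, by omega⟩ with he0n
  set e1n : Fin n := ⟨1, by omega⟩ with he1n
  set e0m : Fin m := ⟨0, by omega⟩ with he0m
  set e1m : Fin m := ⟨1, by omega⟩ with he1m
  set E : Matrix (Fin n) (Fin m) ℝ := Matrix.single e0n e0m 1 with hE
  set a : ℝ := T E e0n e0m with ha
  set b : ℝ := T E e0n e1m with hb
  set c : ℝ := T E e1n e0m with hc
  set d : ℝ := T E e1n e1m with hd
  refine ⟨a - b - c + d, b - d, c - d, d, ?_⟩
  apply LinearMap.ext
  intro X
  funext j k
  have lhs_eq : T X j k = ∑ j', ∑ k', X j' k' * T (Matrix.single j' k' 1) j k := by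
    conv_lhs => rw [matrix_eq_sum_single X]
    rw [map_sum, Matrix.sum_apply]
    refine Finset.sum_congr rfl fun j' _ => ?_
    rw [map_sum, Matrix.sum_apply]
    refine Finset.sum_congr rfl fun k' _ => ?_
    have : Matrix.single j' k' (X j' k') = X j' k' • Matrix.single j' k' (1:ℝ) := by
      rw [smul_single, smul_eq_mul, mul_one]
    rw [this, _root_.map_smul]
    rfl
  rw [lhs_eq]
  have step : ∀ (j' : Fin n) (k' : Fin m),
      X j' k' * T (Matrix.single j' k' 1) j k
      = (a - b - c + d) * (if j = j' then if k = k' then X j' k' else 0 else 0)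
        + (b - d) * (if j = j' then X j' k' else 0)
        + (c - d) * (if k = k' then X j' k' else 0)
        + d * X j' k' := by
    intro j' k'
    rw [eval_stdBasis hn hm T hT j j' k k']
    by_cases h1 : j = j' <;> by_cases h2 : k = k' <;>
      simp only [h1, h2, if_true, if_false, if_pos, if_neg, ← he0n, ← he1n, ← he0m, ← he1m,
        ← hE, ← ha, ← hb, ← hc, ← hd] <;> ring
  calc ∑ j', ∑ k', X j' k' * T (Matrix.single j' k' 1) j k
      = ∑ j', ∑ k', ((a - b - c + d) * (if j = j' then if k = k' then X j' k' else 0 else 0)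
        + (b - d) * (if j = j' then X j' k' else 0)
        + (c - d) * (if k = k' then X j' k' else 0)
        + d * X j' k') := by
        exact Finset.sum_congr rfl fun j' _ => Finset.sum_congr rfl fun k' _ => step j' k'
    _ = (a - b - c + d) * X j k + (b - d) * (∑ k', X j k')
        + (c - d) * (∑ j', X j' k) + d * (∑ j', ∑ k', X j' k') := by
        simp only [Finset.sum_add_distrib, ← Finset.mul_sum]
        have s1 : (∑ i : Fin n, ∑ i1 : Fin m,
            if j = i then if k = i1 then X i i1 else 0 else 0) = X j k := by
          have h : ∀ i : Fin n, (∑ i1 : Fin m,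
              if j = i then if k = i1 then X i i1 else 0 else 0)
              = if j = i then X i k else 0 := by
            intro i; split_ifs with h <;> simp [Finset.sum_ite_eq]
          simp [h, Finset.sum_ite_eq]
        have s2 : (∑ i : Fin n, ∑ i1 : Fin m, if j = i then X i i1 else 0)
            = ∑ k', X j k' := by
          have h : ∀ i : Fin n, (∑ i1 : Fin m, if j = i then X i i1 else 0)
              = if j = i then ∑ i1, X i i1 else 0 := by
            intro i; split_ifs <;> simp
          simp [h, Finset.sum_ite_eq]
        have s3 : (∑ i : Fin n, ∑ i1 : Fin m, if k = i1 then X i i1 else 0)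
            = ∑ j', X j' k := by
          refine Finset.sum_congr rfl fun i _ => ?_
          simp [Finset.sum_ite_eq]
        rw [s1, s2, s3]
    _ = ((a - b - c + d) • tId n m + (b - d) • tRow n m + (c - d) • tCol n m
        + d • tAll n m) X j k := by
        simp [tId, tRow, tCol, tAll]; rfl


lemma span_eq (hn : 2 ≤ n) (hm : 2 ≤ m) :
    equivariantMaps n m
      = Submodule.span ℝ (Set.range ![tId n m, tRow n m, tCol n m, tAll n m]) := by
  apply le_antisymm
  · intro T hT
    obtain ⟨c0, c1, c2, c3, hrep⟩ := reprT hn hm T hT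
    rw [hrep]
    have h0 : tId n m ∈ Set.range ![tId n m, tRow n m, tCol n m, tAll n m] := ⟨0, rfl⟩
    have h1 : tRow n m ∈ Set.range ![tId n m, tRow n m, tCol n m, tAll n m] := ⟨1, rfl⟩
    have h2 : tCol n m ∈ Set.range ![tId n m, tRow n m, tCol n m, tAll n m] := ⟨2, rfl⟩
    have h3 : tAll n m ∈ Set.range ![tId n m, tRow n m, tCol n m, tAll n m] := ⟨3, rfl⟩
    exact Submodule.add_mem _ (Submodule.add_mem _ (Submodule.add_mem _
      (Submodule.smul_mem _ _ (Submodule.subset_span h0))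
      (Submodule.smul_mem _ _ (Submodule.subset_span h1)))
      (Submodule.smul_mem _ _ (Submodule.subset_span h2)))
      (Submodule.smul_mem _ _ (Submodule.subset_span h3))
  · rw [Submodule.span_le]
    rintro x ⟨i, rfl⟩
    fin_cases i
    · exact tId_mem
    · exact tRow_mem
    · exact tCol_mem
    · exact tAll_mem

lemma indep (hn : 2 ≤ n) (hm : 2 ≤ m) :
    LinearIndependent ℝ ![tId n m, tRow n m, tCol n m, tAll n m] := by
  rw [Fintype.linearIndependent_iff]
  intro g hg
  set e0n : Fin n := ⟨0, by omega⟩ with he0n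
  set e1n : Fin n := ⟨1, by omega⟩ with he1n
  set e0m : Fin m := ⟨0, by omega⟩ with he0m
  set e1m : Fin m := ⟨1, by omega⟩ with he1m
  have hn01 : e0n ≠ e1n := by simp [he0n, he1n, Fin.ext_iff]
  have hm01 : e0m ≠ e1m := by simp [he0m, he1m, Fin.ext_iff]
  set E : Matrix (Fin n) (Fin m) ℝ := Matrix.single e0n e0m 1 with hE
  have h := fun (p : Fin n) (q : Fin m) =>
    congrFun (congrFun (congrArg (fun L => L E) hg) p) q
  simp only [Fin.sum_univ_four, Matrix.cons_val_zero, Matrix.cons_val_one, Matrix.head_cons,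
    Matrix.cons_val_two, Matrix.cons_val_three, Matrix.tail_cons, Matrix.head_fin_const,
    LinearMap.add_apply, LinearMap.smul_apply, LinearMap.zero_apply,
    Matrix.add_apply, Matrix.smul_apply, Matrix.zero_apply, smul_eq_mul] at h
  have hid : ∀ p q, tId n m E p q = if e0n = p ∧ e0m = q then 1 else 0 := by
    intro p q; simp [tId, hE, Matrix.single]
  have hrow : ∀ p q, tRow n m E p q = if e0n = p then 1 else 0 := by
    intro p q
    show (∑ k', E p k') = _
    simp [hE, Matrix.single, ite_and, Finset.sum_ite_eq]
  have hcol : ∀ p q, tCol n m E p q = if e0m = q then 1 else 0 := by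
    intro p q
    show (∑ j', E j' q) = _
    simp [hE, Matrix.single, ite_and, Finset.sum_ite_eq]
  have hall : ∀ p q, tAll n m E p q = 1 := by
    intro p q
    show (∑ j', ∑ k', E j' k') = _
    simp [hE, Matrix.single, ite_and, Finset.sum_ite_eq]
  have h11 := h e1n e1m
  have h01 := h e0n e1m
  have h10 := h e1n e0m
  have h00 := h e0n e0m
  rw [hid, hrow, hcol, hall] at h11 h01 h10 h00
  simp [hn01, hm01, Ne.symm hn01, Ne.symm hm01] at h11 h01 h10 h00
  have g3 : g 3 = 0 := by linarith
  have g1 : g 1 = 0 := by linarith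
  have g2 : g 2 = 0 := by linarith
  have g0 : g 0 = 0 := by linarith
  intro i
  fin_cases i <;> assumption

end EquivAux

/-- For `n, m ≥ 2`, the vector space of linear `S_n × S_m`-equivariant maps
`ℝ^{n×m} → ℝ^{n×m}` has dimension exactly 4. -/
theorem equivariantMaps_finrank (n m : ℕ) (hn : 2 ≤ n) (hm : 2 ≤ m) :
    Module.finrank ℝ (equivariantMaps n m) = 4 := by
  rw [EquivAux.span_eq hn hm]
  have := finrank_span_eq_card (EquivAux.indep (n := n) (m := m) hn hm)
  simpa using this
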